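/- Let d be a positive integer and let (T, (a_t,b_t,w_t)_{t∈T}) be a nonempty labeled long-edge family with a distribution Δ. Suppose there exists v ∈ ℕ such that no edge covers v (i.e., no t ∈ T satisfies a_t < v < b_t), while some edge lies entirely to the left of v (b_t ≤ v) and some edge lies entirely to the right of v (a_{t'} ≥ v); equivalently, the family is not an offset template. Then Q_*^d(T,Δ) := ∑_P (−1)^{|P|−1}·(|P|−1)! · ∏_{E ∈ P} N_*^d(E) = 0, where the sum is over all partitions P of T into nonempty blocks and |P| is the number of blocks. -/

import Mathlib

open scoped Classical

/-- `w_i(E)`: the total weight of the edges in `E` lying over the interval `[i, i+1]`. -/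
def wOf {T : Type} (a b w : T → ℕ) (E : Finset T) (i : ℕ) : ℕ :=
  ∑ t ∈ E.filter (fun t => a t ≤ i ∧ i < b t), w t

/-- `m_i(E)`: the number of edges in `E` whose distribution value is `i`. -/
def mOf {T : Type} (Δ : T → ℕ) (E : Finset T) (i : ℕ) : ℕ :=
  (E.filter (fun t => Δ t = i)).card

/-- `P` is a partition of the finite type `T` into nonempty blocks. -/
def IsPartitionOfUniv {T : Type} (P : Finset (Finset T)) : Prop :=
  (∀ E ∈ P, E.Nonempty) ∧ ∀ x : T, ∃! E, E ∈ P ∧ x ∈ E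

/-- A subset `E` of the edges is allowable for `d`. -/
def AllowableE {T : Type} (a b w : T → ℕ) (d : ℕ) (E : Finset T) : Prop :=
  (∀ t ∈ E, b t ≤ d + 1) ∧ (∀ t ∈ E, b t = d + 1 → w t = 1) ∧
    ∀ i : ℕ, wOf a b w E i ≤ i

/-- `N_*^d(E) = ∏_{i∈ℕ} (i − w_i(E) + m_i(E))_{m_i(E)}` if `E` is allowable for `d`,
and `0` otherwise. -/
noncomputable def NstarD {T : Type} (a b w Δ : T → ℕ) (d : ℕ) (E : Finset T) : ℤ :=
  if AllowableE a b w d E then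
    ∏ᶠ i : ℕ, (descPochhammer ℤ (mOf Δ E i)).eval
      ((i : ℤ) - (wOf a b w E i : ℤ) + (mOf Δ E i : ℤ))
  else 0

open Finset Polynomial

/-! ### Coefficients of `descPochhammer` -/

lemma descPoch_coeff_one (m : ℕ) :
    (descPochhammer ℤ (m + 1)).coeff 1 = (-1 : ℤ) ^ m * m.factorial := by
  induction m with
  | zero => simp
  | succ m ih =>
    have h0 : (descPochhammer ℤ (m + 1)).coeff 0 = 0 := by
      rw [Polynomial.coeff_zero_eq_eval_zero]
      simp
    rw [descPochhammer_succ_right, mul_sub, Polynomial.coeff_sub, Polynomial.coeff_mul_X,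
      ← Polynomial.C_eq_natCast, Polynomial.coeff_mul_C, h0, ih]
    push_cast [Nat.factorial_succ]
    ring

/-! ### The partition of `univ` induced by a coloring -/

noncomputable def partnOf {α : Type} [Fintype α] {n : ℕ} (c : α → Fin n) :
    Finset (Finset α) :=
  Finset.univ.image (fun t => Finset.univ.filter (fun s => c s = c t))

lemma mem_block_self {α : Type} [Fintype α] {n : ℕ} (c : α → Fin n) (t : α) :
    t ∈ Finset.univ.filter (fun s => c s = c t) := by simp

lemma partnOf_isPartition {α : Type} [Fintype α] {n : ℕ} (c : α → Fin n) :
    IsPartitionOfUniv (partnOf c) := by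
  constructor
  · intro E hE
    obtain ⟨t, -, rfl⟩ := Finset.mem_image.1 hE
    exact ⟨t, mem_block_self c t⟩
  · intro x
    refine ⟨Finset.univ.filter (fun s => c s = c x),
      ⟨Finset.mem_image.2 ⟨x, Finset.mem_univ x, rfl⟩, mem_block_self c x⟩, ?_⟩
    rintro E ⟨hE, hxE⟩
    obtain ⟨t, -, rfl⟩ := Finset.mem_image.1 hE
    have : c x = c t := (Finset.mem_filter.1 hxE).2
    simp [this]

lemma prod_fiber_eq {α : Type} [Fintype α] {n : ℕ} (f : Finset α → ℤ) (hf : f ∅ = 1)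
    (c : α → Fin n) :
    ∏ j : Fin n, f (Finset.univ.filter fun t => c t = j) = ∏ E ∈ partnOf c, f E := by
  have h1 : ∏ j : Fin n, f (Finset.univ.filter fun t => c t = j)
      = ∏ j ∈ Finset.univ.image c, f (Finset.univ.filter fun t => c t = j) := by
    refine (Finset.prod_subset (Finset.subset_univ _) ?_).symm
    intro j _ hj
    have : (Finset.univ.filter fun t => c t = j) = ∅ := by
      refine Finset.filter_false_of_mem ?_
      intro t _ htj
      exact hj (Finset.mem_image.2 ⟨t, Finset.mem_univ t, htj⟩)
    rw [this, hf]
  have h2 : partnOf c = (Finset.univ.image c).image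
      (fun j => Finset.univ.filter fun t => c t = j) := by
    rw [Finset.image_image]
    rfl
  have hinj : ∀ x ∈ Finset.univ.image c, ∀ y ∈ Finset.univ.image c,
      (Finset.univ.filter fun t => c t = x) = (Finset.univ.filter fun t => c t = y) → x = y := by
    intro x hx y hy hxy
    obtain ⟨tx, -, rfl⟩ := Finset.mem_image.1 hx
    have := mem_block_self c tx
    rw [hxy] at this
    exact (Finset.mem_filter.1 this).2
  rw [h1, h2, Finset.prod_image hinj]

lemma card_colorings {α : Type} [Fintype α] {n : ℕ} {P : Finset (Finset α)}
    (hP : IsPartitionOfUniv P) :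
    (Finset.univ.filter fun c : α → Fin n => partnOf c = P).card = n.descFactorial P.card := by
  classical
  set blk : α → Finset α := fun x => (hP.2 x).exists.choose with hblkdef
  have hblk : ∀ x : α, blk x ∈ P ∧ x ∈ blk x := fun x => (hP.2 x).exists.choose_spec
  have hblku : ∀ (x : α) (E : Finset α), E ∈ P → x ∈ E → E = blk x := by
    intro x E hE hxE
    exact (hP.2 x).unique ⟨hE, hxE⟩ ⟨(hblk x).1, (hblk x).2⟩
  set pt : {E // E ∈ P} → α := fun E => (hP.1 E.1 E.2).choose with hptdef
  have hpt : ∀ E : {E // E ∈ P}, pt E ∈ E.1 := fun E => (hP.1 E.1 E.2).choose_spec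
  have key : ∀ c : α → Fin n, partnOf c = P → ∀ E ∈ P, ∀ t ∈ E,
      E = Finset.univ.filter fun s => c s = c t := by
    intro c hc E hE t htE
    rw [← hc] at hE
    obtain ⟨u, -, rfl⟩ := Finset.mem_image.1 hE
    have : c t = c u := (Finset.mem_filter.1 htE).2
    simp [this]
  have hcard : (Finset.univ.filter fun c : α → Fin n => partnOf c = P).card
      = (Finset.univ : Finset ({E // E ∈ P} ↪ Fin n)).card := by
    refine Finset.card_bij'
      (i := fun c hc => ⟨fun E => c (pt E), ?_⟩)
      (j := fun φ _ => fun t => φ ⟨blk t, (hblk t).1⟩) ?_ ?_ ?_ ?_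
    · -- injectivity of i c
      intro E E' hEE'
      have hc : partnOf c = P := (Finset.mem_filter.1 hc).2
      have h1 : E.1 = Finset.univ.filter fun s => c s = c (pt E) :=
        key c hc E.1 E.2 (pt E) (hpt E)
      have h2 : E'.1 = Finset.univ.filter fun s => c s = c (pt E') :=
        key c hc E'.1 E'.2 (pt E') (hpt E')
      have hEE'' : c (pt E) = c (pt E') := hEE'
      apply Subtype.ext
      rw [h1, h2, hEE'']
    · intro c hc
      exact Finset.mem_univ _
    · -- j φ lands in the filter
      intro φ _
      simp only [Finset.mem_filter, Finset.mem_univ, true_and]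
      have hblkc : ∀ t : α,
          (Finset.univ.filter fun s => φ ⟨blk s, (hblk s).1⟩ = φ ⟨blk t, (hblk t).1⟩) = blk t := by
        intro t
        ext s
        simp only [Finset.mem_filter, Finset.mem_univ, true_and]
        constructor
        · intro h
          have : blk s = blk t := congrArg Subtype.val (φ.injective h)
          rw [← this]; exact (hblk s).2
        · intro hs
          have : blk t = blk s := hblku s (blk t) (hblk t).1 hs
          simp [this]
      unfold partnOf
      ext E
      simp only [Finset.mem_image, Finset.mem_univ, true_and]
      constructor
      · rintro ⟨t, rfl⟩
        rw [hblkc t]; exact (hblk t).1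
      · intro hE
        obtain ⟨t, ht⟩ := hP.1 E hE
        exact ⟨t, by rw [hblkc t, ← hblku t E hE ht]⟩
    · -- left inverse
      intro c hc
      have hc' : partnOf c = P := (Finset.mem_filter.1 hc).2
      funext t
      show c (pt ⟨blk t, (hblk t).1⟩) = c t
      have h1 : blk t = Finset.univ.filter fun s => c s = c t :=
        key c hc' (blk t) (hblk t).1 t (hblk t).2
      have h2 : pt ⟨blk t, (hblk t).1⟩ ∈ blk t := hpt ⟨blk t, (hblk t).1⟩
      have h3 : ∀ x : α, x ∈ blk t → c x = c t := by
        intro x hx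
        rw [h1] at hx
        exact (Finset.mem_filter.1 hx).2
      exact h3 _ h2
    · -- right inverse
      intro φ _
      apply DFunLike.ext
      intro E
      simp only [Function.Embedding.coeFn_mk]
      show φ _ = φ E
      congr 1
      apply Subtype.ext
      exact (hblku (pt E) E.1 E.2 (hpt E)).symm
  rw [hcard, Finset.card_univ, Fintype.card_embedding_eq, Fintype.card_fin, Fintype.card_coe]

/-! ### The partition polynomial -/

noncomputable def partPoly (α : Type) [Fintype α] (f : Finset α → ℤ) : Polynomial ℤ :=
  ∑ P : Finset (Finset α),
    if IsPartitionOfUniv P then (∏ E ∈ P, f E) • descPochhammer ℤ P.card else 0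

lemma partPoly_eval (α : Type) [Fintype α] (f : Finset α → ℤ) (hf : f ∅ = 1) (n : ℕ) :
    (partPoly α f).eval (n : ℤ)
      = ∑ c : α → Fin n, ∏ j : Fin n, f (Finset.univ.filter fun t => c t = j) := by
  have hsum : ∑ c : α → Fin n, ∏ j : Fin n, f (Finset.univ.filter fun t => c t = j)
      = ∑ c : α → Fin n, ∏ E ∈ partnOf c, f E := by
    exact Finset.sum_congr rfl fun c _ => prod_fiber_eq f hf c
  rw [hsum, ← Finset.sum_fiberwise_of_maps_to (g := fun c : α → Fin n => partnOf c)
    (fun c _ => Finset.mem_univ (partnOf c)) (fun c => ∏ E ∈ partnOf c, f E)]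
  unfold partPoly
  rw [Polynomial.eval_finset_sum]
  apply Finset.sum_congr rfl
  intro P _
  rw [apply_ite (fun q : Polynomial ℤ => q.eval (n : ℤ))]
  by_cases hP : IsPartitionOfUniv P
  · rw [if_pos hP]
    have h1 : ∀ c ∈ Finset.univ.filter fun c : α → Fin n => partnOf c = P,
        (∏ E ∈ partnOf c, f E) = ∏ E ∈ P, f E := by
      intro c hc
      rw [(Finset.mem_filter.1 hc).2]
    rw [Finset.sum_congr rfl h1, Finset.sum_const, card_colorings hP]
    rw [Polynomial.eval_smul, smul_eq_mul, nsmul_eq_mul,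
      descPochhammer_eval_eq_descFactorial ℤ n P.card, mul_comm]
  · rw [if_neg hP, Polynomial.eval_zero]
    have : (Finset.univ.filter fun c : α → Fin n => partnOf c = P) = ∅ := by
      refine Finset.filter_false_of_mem ?_
      intro c _ hc
      exact hP (hc ▸ partnOf_isPartition c)
    rw [this, Finset.sum_empty]

lemma card_ne_zero_of_partition {α : Type} [Fintype α] [Nonempty α] {P : Finset (Finset α)}
    (hP : IsPartitionOfUniv P) : P.card ≠ 0 := by
  obtain ⟨x⟩ := ‹Nonempty α›
  obtain ⟨E, hE, -⟩ := (hP.2 x).exists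
  exact Finset.card_ne_zero_of_mem hE

lemma partPoly_coeff_zero (α : Type) [Fintype α] [Nonempty α] (f : Finset α → ℤ) :
    (partPoly α f).coeff 0 = 0 := by
  unfold partPoly
  rw [Polynomial.finset_sum_coeff]
  refine Finset.sum_eq_zero fun P _ => ?_
  rw [apply_ite (fun q : Polynomial ℤ => q.coeff 0)]
  by_cases hP : IsPartitionOfUniv P
  · rw [if_pos hP, Polynomial.coeff_smul, Polynomial.coeff_zero_eq_eval_zero,
      descPochhammer_ne_zero_eval_zero (R := ℤ) (card_ne_zero_of_partition hP), smul_zero]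
  · rw [if_neg hP, Polynomial.coeff_zero]

lemma partPoly_coeff_one (α : Type) [Fintype α] [Nonempty α] (f : Finset α → ℤ) :
    (partPoly α f).coeff 1
      = ∑ P : Finset (Finset α),
          if IsPartitionOfUniv P then
            (-1 : ℤ) ^ (P.card - 1) * (Nat.factorial (P.card - 1) : ℤ) * ∏ E ∈ P, f E
          else 0 := by
  unfold partPoly
  rw [Polynomial.finset_sum_coeff]
  refine Finset.sum_congr rfl fun P _ => ?_
  rw [apply_ite (fun q : Polynomial ℤ => q.coeff 1)]
  by_cases hP : IsPartitionOfUniv P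
  · rw [if_pos hP, if_pos hP, Polynomial.coeff_smul, smul_eq_mul]
    obtain ⟨m, hm⟩ : ∃ m, P.card = m + 1 :=
      ⟨P.card - 1, (Nat.succ_pred_eq_of_ne_zero (card_ne_zero_of_partition hP)).symm⟩
    rw [hm, descPoch_coeff_one]
    simp only [Nat.add_sub_cancel]
    ring
  · rw [if_neg hP, if_neg hP, Polynomial.coeff_zero]

/-! ### `NstarD` basics and multiplicativity across an uncovered vertex -/

lemma NstarD_empty {T : Type} (a b w Δ : T → ℕ) (d : ℕ) :
    NstarD a b w Δ d (∅ : Finset T) = 1 := by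
  have hA : AllowableE a b w d (∅ : Finset T) := by
    refine ⟨fun t ht => absurd ht (Finset.notMem_empty t),
      fun t ht => absurd ht (Finset.notMem_empty t), fun i => ?_⟩
    simp [wOf]
  rw [NstarD, if_pos hA]
  have : ∀ i : ℕ, (descPochhammer ℤ (mOf Δ (∅ : Finset T) i)).eval
      ((i : ℤ) - (wOf a b w (∅ : Finset T) i : ℤ) + (mOf Δ (∅ : Finset T) i : ℤ)) = 1 := by
    intro i
    simp [mOf]
  rw [finprod_congr this, finprod_one]

section Mult

variable {T : Type} (a b w Δ : T → ℕ) (d v : ℕ)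

/-- the `i`-th factor of the `N` product -/
noncomputable def Nfac (E : Finset T) (i : ℕ) : ℤ :=
  (descPochhammer ℤ (mOf Δ E i)).eval
    ((i : ℤ) - (wOf a b w E i : ℤ) + (mOf Δ E i : ℤ))

lemma Nfac_support_finite (E : Finset T) :
    (Function.mulSupport fun i => Nfac a b w Δ E i).Finite := by
  apply Set.Finite.subset (E.image Δ).finite_toSet
  intro i hi
  simp only [Function.mem_mulSupport] at hi
  by_contra hmem
  have hm : mOf Δ E i = 0 := by
    rw [mOf, Finset.card_eq_zero]
    refine Finset.filter_false_of_mem fun t ht hti => ?_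
    exact hmem (Finset.mem_coe.2 (Finset.mem_image.2 ⟨t, ht, hti⟩))
  apply hi
  rw [Nfac, hm]
  simp

lemma NstarD_eq_finprod_Nfac (E : Finset T) (h : AllowableE a b w d E) :
    NstarD a b w Δ d E = ∏ᶠ i : ℕ, Nfac a b w Δ E i := by
  rw [NstarD, if_pos h]
  rfl

lemma NstarD_mul {T : Type} (a b w Δ : T → ℕ) (d v : ℕ)
    (hab : ∀ t, a t < b t)
    (hv : ∀ t, ¬ (a t < v ∧ v < b t))
    (hΔ : ∀ t, a t ≤ Δ t ∧ Δ t < b t)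
    (E : Finset T) :
    NstarD a b w Δ d E
      = NstarD a b w Δ d (E.filter (fun t => b t ≤ v)) *
        NstarD a b w Δ d (E.filter (fun t => ¬ b t ≤ v)) := by
  classical
  set EL := E.filter (fun t => b t ≤ v) with hELdef
  set ER := E.filter (fun t => ¬ b t ≤ v) with hERdef
  have hRa : ∀ t ∈ ER, v ≤ a t := by
    intro t ht
    have h1 : ¬ b t ≤ v := (Finset.mem_filter.1 ht).2
    have h2 : v < b t := lt_of_not_ge h1
    by_contra h3
    exact hv t ⟨lt_of_not_ge h3, h2⟩
  have hLb : ∀ t ∈ EL, b t ≤ v := fun t ht => (Finset.mem_filter.1 ht).2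
  have hWsum : ∀ i, wOf a b w E i = wOf a b w EL i + wOf a b w ER i := by
    intro i
    rw [wOf, wOf, wOf, ← Finset.sum_union]
    · congr 1
      rw [← Finset.filter_union, Finset.filter_union_filter_not_eq]
    · exact Finset.disjoint_filter_filter
        (Finset.disjoint_filter_filter_not E E (fun t => b t ≤ v))
  have hMsum : ∀ i, mOf Δ E i = mOf Δ EL i + mOf Δ ER i := by
    intro i
    rw [mOf, mOf, mOf, ← Finset.card_union_of_disjoint]
    · congr 1
      rw [← Finset.filter_union, Finset.filter_union_filter_not_eq]
    · exact Finset.disjoint_filter_filter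
        (Finset.disjoint_filter_filter_not E E (fun t => b t ≤ v))
  have hWL : ∀ i, v ≤ i → wOf a b w EL i = 0 := by
    intro i hvi
    rw [wOf, Finset.filter_false_of_mem, Finset.sum_empty]
    intro t ht hcon
    exact absurd (lt_of_lt_of_le hcon.2 (le_trans (hLb t ht) hvi)) (lt_irrefl i)
  have hWR : ∀ i, i < v → wOf a b w ER i = 0 := by
    intro i hiv
    rw [wOf, Finset.filter_false_of_mem, Finset.sum_empty]
    intro t ht hcon
    exact absurd (lt_of_lt_of_le hiv (le_trans (hRa t ht) hcon.1)) (lt_irrefl i)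
  have hML : ∀ i, v ≤ i → mOf Δ EL i = 0 := by
    intro i hvi
    rw [mOf, Finset.filter_false_of_mem, Finset.card_empty]
    intro t ht hcon
    have : Δ t < v := lt_of_lt_of_le (hΔ t).2 (hLb t ht)
    omega
  have hMR : ∀ i, i < v → mOf Δ ER i = 0 := by
    intro i hiv
    rw [mOf, Finset.filter_false_of_mem, Finset.card_empty]
    intro t ht hcon
    have : v ≤ Δ t := le_trans (hRa t ht) (hΔ t).1
    omega
  have hWmono : ∀ (F G : Finset T), F ⊆ G → ∀ i, wOf a b w F i ≤ wOf a b w G i := by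
    intro F G hFG i
    exact Finset.sum_le_sum_of_subset (Finset.filter_subset_filter _ hFG)
  have hallow : AllowableE a b w d E ↔ (AllowableE a b w d EL ∧ AllowableE a b w d ER) := by
    constructor
    · rintro ⟨h1, h2, h3⟩
      exact ⟨⟨fun t ht => h1 t (Finset.mem_of_mem_filter t ht),
          fun t ht => h2 t (Finset.mem_of_mem_filter t ht),
          fun i => le_trans (hWmono EL E (Finset.filter_subset _ E) i) (h3 i)⟩,
        ⟨fun t ht => h1 t (Finset.mem_of_mem_filter t ht),
          fun t ht => h2 t (Finset.mem_of_mem_filter t ht),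
          fun i => le_trans (hWmono ER E (Finset.filter_subset _ E) i) (h3 i)⟩⟩
    · rintro ⟨⟨hL1, hL2, hL3⟩, ⟨hR1, hR2, hR3⟩⟩
      refine ⟨?_, ?_, ?_⟩
      · intro t ht
        by_cases hp : b t ≤ v
        · exact hL1 t (Finset.mem_filter.2 ⟨ht, hp⟩)
        · exact hR1 t (Finset.mem_filter.2 ⟨ht, hp⟩)
      · intro t ht
        by_cases hp : b t ≤ v
        · exact hL2 t (Finset.mem_filter.2 ⟨ht, hp⟩)
        · exact hR2 t (Finset.mem_filter.2 ⟨ht, hp⟩)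
      · intro i
        rw [hWsum i]
        rcases lt_or_ge i v with hiv | hvi
        · rw [hWR i hiv, Nat.add_zero]; exact hL3 i
        · rw [hWL i hvi, Nat.zero_add]; exact hR3 i
  have hfac : ∀ i, Nfac a b w Δ E i = Nfac a b w Δ EL i * Nfac a b w Δ ER i := by
    intro i
    rcases lt_or_ge i v with hiv | hvi
    · have h1 : Nfac a b w Δ ER i = 1 := by
        rw [Nfac, hMR i hiv]
        simp
      have h2 : mOf Δ E i = mOf Δ EL i := by rw [hMsum i, hMR i hiv, Nat.add_zero]
      have h3 : wOf a b w E i = wOf a b w EL i := by rw [hWsum i, hWR i hiv, Nat.add_zero]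
      rw [h1, mul_one, Nfac, Nfac, h2, h3]
    · have h1 : Nfac a b w Δ EL i = 1 := by
        rw [Nfac, hML i hvi]
        simp
      have h2 : mOf Δ E i = mOf Δ ER i := by rw [hMsum i, hML i hvi, Nat.zero_add]
      have h3 : wOf a b w E i = wOf a b w ER i := by rw [hWsum i, hWL i hvi, Nat.zero_add]
      rw [h1, one_mul, Nfac, Nfac, h2, h3]
  by_cases hE : AllowableE a b w d E
  · obtain ⟨hEL, hER⟩ := hallow.1 hE
    rw [NstarD_eq_finprod_Nfac a b w Δ d E hE, NstarD_eq_finprod_Nfac a b w Δ d EL hEL,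
      NstarD_eq_finprod_Nfac a b w Δ d ER hER, finprod_congr hfac,
      finprod_mul_distrib (Nfac_support_finite a b w Δ EL) (Nfac_support_finite a b w Δ ER)]
  · rw [NstarD, if_neg hE]
    rcases not_and_or.1 ((not_iff_not.2 hallow).1 hE) with h | h
    · have hz : NstarD a b w Δ d EL = 0 := by rw [NstarD, if_neg h]
      rw [hz, zero_mul]
    · have hz : NstarD a b w Δ d ER = 0 := by rw [NstarD, if_neg h]
      rw [hz, mul_zero]

end Mult

/-! ### Factorization of the coloring sums -/

lemma sum_colorings_factor {T : Type} [Fintype T] (a b w Δ : T → ℕ) (d v : ℕ)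
    (hab : ∀ t, a t < b t)
    (hv : ∀ t, ¬ (a t < v ∧ v < b t))
    (hΔ : ∀ t, a t ≤ Δ t ∧ Δ t < b t) (n : ℕ) :
    ∑ c : T → Fin n, ∏ j : Fin n, NstarD a b w Δ d (Finset.univ.filter fun t => c t = j)
    = (∑ cL : {t : T // b t ≤ v} → Fin n, ∏ j : Fin n,
         NstarD a b w Δ d (((Finset.univ.filter fun s : {t : T // b t ≤ v} => cL s = j)).map
           (Function.Embedding.subtype _)))
      * (∑ cR : {t : T // ¬ b t ≤ v} → Fin n, ∏ j : Fin n,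
         NstarD a b w Δ d (((Finset.univ.filter fun s : {t : T // ¬ b t ≤ v} => cR s = j)).map
           (Function.Embedding.subtype _))) := by
  classical
  have step1 : ∀ c : T → Fin n,
      ∏ j : Fin n, NstarD a b w Δ d (Finset.univ.filter fun t => c t = j)
      = (∏ j : Fin n, NstarD a b w Δ d
            ((Finset.univ.filter fun t => c t = j).filter fun t => b t ≤ v))
        * ∏ j : Fin n, NstarD a b w Δ d
            ((Finset.univ.filter fun t => c t = j).filter fun t => ¬ b t ≤ v) := by
    intro c
    rw [← Finset.prod_mul_distrib]
    exact Finset.prod_congr rfl fun j _ => NstarD_mul a b w Δ d v hab hv hΔ _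
  have hLset : ∀ (c : T → Fin n) (j : Fin n),
      (Finset.univ.filter fun t => c t = j).filter (fun t => b t ≤ v)
      = ((Finset.univ.filter fun s : {t : T // b t ≤ v} => c s.1 = j)).map
          (Function.Embedding.subtype _) := by
    intro c j
    ext t
    simp only [Finset.mem_filter, Finset.mem_univ, true_and, Finset.mem_map,
      Function.Embedding.coe_subtype]
    constructor
    · rintro ⟨h1, h2⟩
      exact ⟨⟨t, h2⟩, h1, rfl⟩
    · rintro ⟨⟨s, hs⟩, h1, rfl⟩
      exact ⟨h1, hs⟩
  have hRset : ∀ (c : T → Fin n) (j : Fin n),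
      (Finset.univ.filter fun t => c t = j).filter (fun t => ¬ b t ≤ v)
      = ((Finset.univ.filter fun s : {t : T // ¬ b t ≤ v} => c s.1 = j)).map
          (Function.Embedding.subtype _) := by
    intro c j
    ext t
    simp only [Finset.mem_filter, Finset.mem_univ, true_and, Finset.mem_map,
      Function.Embedding.coe_subtype]
    constructor
    · rintro ⟨h1, h2⟩
      exact ⟨⟨t, h2⟩, h1, rfl⟩
    · rintro ⟨⟨s, hs⟩, h1, rfl⟩
      exact ⟨h1, hs⟩
  set A : ({t : T // b t ≤ v} → Fin n) → ℤ := fun cL => ∏ j : Fin n,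
    NstarD a b w Δ d (((Finset.univ.filter fun s : {t : T // b t ≤ v} => cL s = j)).map
      (Function.Embedding.subtype _)) with hA
  set B : ({t : T // ¬ b t ≤ v} → Fin n) → ℤ := fun cR => ∏ j : Fin n,
    NstarD a b w Δ d (((Finset.univ.filter fun s : {t : T // ¬ b t ≤ v} => cR s = j)).map
      (Function.Embedding.subtype _)) with hB
  calc ∑ c : T → Fin n, ∏ j : Fin n, NstarD a b w Δ d (Finset.univ.filter fun t => c t = j)
      = ∑ p : ({t : T // b t ≤ v} → Fin n) × ({t : T // ¬ b t ≤ v} → Fin n),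
          A p.1 * B p.2 := by
        refine Fintype.sum_equiv (Equiv.piEquivPiSubtypeProd (fun t => b t ≤ v) (fun _ => Fin n))
          _ _ ?_
        intro c
        rw [step1 c]
        simp only [Equiv.piEquivPiSubtypeProd_apply, hA, hB]
        congr 1
        · exact Finset.prod_congr rfl fun j _ => by rw [hLset c j]
        · exact Finset.prod_congr rfl fun j _ => by rw [hRset c j]
    _ = ∑ cL, ∑ cR, A cL * B cR := Fintype.sum_prod_type _
    _ = (∑ cL, A cL) * (∑ cR, B cR) := (Finset.sum_mul_sum _ _ _ _).symm

lemma sum_univ_congr {β M : Type} [AddCommMonoid M] (i1 i2 : Fintype β) (f : β → M) :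
    @Finset.sum β M _ (@Finset.univ β i1) f = @Finset.sum β M _ (@Finset.univ β i2) f := by
  rw [Subsingleton.elim i1 i2]

set_option maxHeartbeats 1000000

/-- If the family is not an offset template (some vertex `v` is uncovered, with edges
both entirely to its left and entirely to its right), then `Q_*^d(T,Δ) = 0`. -/
theorem Qstar_vanishes_of_not_offset_template (d : ℕ) (hd : 0 < d)
    (T : Type) [Fintype T] [Nonempty T]
    (a b w Δ : T → ℕ)
    (hab : ∀ t, a t < b t) (hw : ∀ t, 1 ≤ w t)
    (hlong : ∀ t, ¬ (b t = a t + 1 ∧ w t = 1))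
    (hΔ : ∀ t, a t ≤ Δ t ∧ Δ t < b t)
    (hsplit : ∃ v : ℕ, (∀ t, ¬ (a t < v ∧ v < b t)) ∧
      (∃ t, b t ≤ v) ∧ (∃ t', v ≤ a t')) :
    (∑ P : Finset (Finset T),
      if IsPartitionOfUniv P then
        (-1 : ℤ) ^ (P.card - 1) * (Nat.factorial (P.card - 1) : ℤ) *
          ∏ E ∈ P, NstarD a b w Δ d E
      else 0)
    = 0 := by
  classical
  obtain ⟨v, hv, ⟨tL, htL⟩, ⟨tR, htR⟩⟩ := hsplit
  haveI hNL : Nonempty {t : T // b t ≤ v} := ⟨⟨tL, htL⟩⟩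
  haveI hNR : Nonempty {t : T // ¬ b t ≤ v} := ⟨⟨tR, by
    have := hab tR
    omega⟩⟩
  have hN0 : NstarD a b w Δ d (∅ : Finset T) = 1 := NstarD_empty a b w Δ d
  have hfL0 : NstarD a b w Δ d ((∅ : Finset {t : T // b t ≤ v}).map
      (Function.Embedding.subtype _)) = 1 := by
    rw [Finset.map_empty]
    exact hN0
  have hfR0 : NstarD a b w Δ d ((∅ : Finset {t : T // ¬ b t ≤ v}).map
      (Function.Embedding.subtype _)) = 1 := by
    rw [Finset.map_empty]
    exact hN0
  have heval : ∀ n : ℕ, (partPoly T (NstarD a b w Δ d)).eval (n : ℤ)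
      = ((partPoly {t : T // b t ≤ v}
            (fun S => NstarD a b w Δ d (S.map (Function.Embedding.subtype _))))
        * (partPoly {t : T // ¬ b t ≤ v}
            (fun S => NstarD a b w Δ d (S.map (Function.Embedding.subtype _))))).eval (n : ℤ) := by
    intro n
    rw [Polynomial.eval_mul, partPoly_eval T (NstarD a b w Δ d) hN0 n,
      partPoly_eval {t : T // b t ≤ v}
        (fun S => NstarD a b w Δ d (S.map (Function.Embedding.subtype _))) hfL0 n,
      partPoly_eval {t : T // ¬ b t ≤ v}
        (fun S => NstarD a b w Δ d (S.map (Function.Embedding.subtype _))) hfR0 n]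
    have h := sum_colorings_factor a b w Δ d v hab hv hΔ n
    convert h using 2
    · exact sum_univ_congr _ _ _
    · exact sum_univ_congr _ _ _
  have hpoly : partPoly T (NstarD a b w Δ d)
      = partPoly {t : T // b t ≤ v}
          (fun S => NstarD a b w Δ d (S.map (Function.Embedding.subtype _)))
        * partPoly {t : T // ¬ b t ≤ v}
          (fun S => NstarD a b w Δ d (S.map (Function.Embedding.subtype _))) := by
    have hsub : Set.range ((↑) : ℕ → ℤ)
        ⊆ {x : ℤ | (partPoly T (NstarD a b w Δ d)).eval x
            = ((partPoly {t : T // b t ≤ v}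
                  (fun S => NstarD a b w Δ d (S.map (Function.Embedding.subtype _))))
              * (partPoly {t : T // ¬ b t ≤ v}
                  (fun S => NstarD a b w Δ d (S.map (Function.Embedding.subtype _))))).eval x} := by
      rintro x ⟨n, rfl⟩
      exact heval n
    have hinf : (Set.range ((↑) : ℕ → ℤ)).Infinite :=
      Set.infinite_range_of_injective (fun m k h => by exact_mod_cast h)
    exact Polynomial.eq_of_infinite_eval_eq _ _ (Set.Infinite.mono hsub hinf)
  rw [← partPoly_coeff_one T (NstarD a b w Δ d), hpoly]
  obtain ⟨qL, hqL⟩ := (Polynomial.X_dvd_iff).2 (partPoly_coeff_zero _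
    (fun S : Finset {t : T // b t ≤ v} => NstarD a b w Δ d (S.map (Function.Embedding.subtype _))))
  obtain ⟨qR, hqR⟩ := (Polynomial.X_dvd_iff).2 (partPoly_coeff_zero _
    (fun S : Finset {t : T // ¬ b t ≤ v} => NstarD a b w Δ d (S.map (Function.Embedding.subtype _))))
  rw [hqL, hqR]
  have hre : (X * qL) * (X * qR) = (qL * qR) * X ^ 2 := by ring
  rw [hre, Polynomial.coeff_mul_X_pow']
  norm_num
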